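/- Let A be a commutative ring, B a commutative A-algebra, and (I_ρ)_{ρ∈ℕ}, (J_ρ)_{ρ∈ℕ} two ideal semifiltrations of A. Let x, y ∈ B and m, n ∈ ℕ. If x is m-integral over (A, (I_ρ)) and y is n-integral over (A, (J_ρ)), then x·y is (n·m)-integral over (A, (I_ρ J_ρ)), where (I_ρ J_ρ)_{ρ∈ℕ} is the (product) ideal semifiltration with ρ-th term I_ρ·J_ρ. -/

import Mathlib

open Polynomial Finset

lemma aux_prod_mem {A : Type*} [CommRing A] (K : ℕ → Ideal A) (hK0 : K 0 = ⊤)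
    (hKmul : ∀ a b : ℕ, K a * K b ≤ K (a + b)) {ι : Type*} [DecidableEq ι] (s : Finset ι)
    (t : ι → ℕ) (f : ι → A) (hf : ∀ i ∈ s, f i ∈ K (t i)) :
    ∏ i ∈ s, f i ∈ K (∑ i ∈ s, t i) := by
  classical
  induction s using Finset.induction with
  | empty => simp [hK0]
  | @insert a s ha ih =>
    rw [Finset.prod_insert ha, Finset.sum_insert ha]
    exact hKmul _ _ (Ideal.mul_mem_mul (hf _ (Finset.mem_insert_self _ _))
      (ih fun i hi => hf i (Finset.mem_insert_of_mem hi)))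

lemma aux_key {A : Type*} [CommRing A] (K : ℕ → Ideal A) (hK0 : K 0 = ⊤)
    (hKmul : ∀ a b : ℕ, K a * K b ≤ K (a + b)) {N : ℕ} (F : Fin N → Fin N → A)
    (hF : ∀ r c : Fin N, F r c = 0 ∨ ((r : ℕ) ≤ (c : ℕ) + 1 ∧ F r c ∈ K ((c : ℕ) + 1 - (r : ℕ))))
    {ι : Type*} [DecidableEq ι] (u : Finset ι) (τ : ι → ι) (g : ι → Fin N)
    (hsum : ∑ i ∈ u, ((g (τ i) : ℕ)) = ∑ i ∈ u, (g i : ℕ)) :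
    ∏ i ∈ u, F (g i) (g (τ i)) ∈ K u.card := by
  classical
  by_cases hz : ∃ i ∈ u, F (g i) (g (τ i)) = 0
  · obtain ⟨i, hi, h0⟩ := hz
    rw [Finset.prod_eq_zero hi h0]; exact zero_mem _
  · push_neg at hz
    have hle : ∀ i ∈ u, (g i : ℕ) ≤ (g (τ i) : ℕ) + 1 ∧
        F (g i) (g (τ i)) ∈ K ((g (τ i) : ℕ) + 1 - (g i : ℕ)) :=
      fun i hi => (hF _ _).resolve_left (hz i hi)
    have hmem := aux_prod_mem K hK0 hKmul u (fun i => (g (τ i) : ℕ) + 1 - (g i : ℕ)) _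
      (fun i hi => (hle i hi).2)
    have hcard : ∑ i ∈ u, ((g (τ i) : ℕ) + 1 - (g i : ℕ)) = u.card := by
      have : ((∑ i ∈ u, ((g (τ i) : ℕ) + 1 - (g i : ℕ)) : ℕ) : ℤ) = (u.card : ℤ) := by
        have h1 : ∑ i ∈ u, ((g (τ i) : ℕ) : ℤ) = ∑ i ∈ u, ((g i : ℕ) : ℤ) := by
          exact_mod_cast congrArg (Nat.cast : ℕ → ℤ) hsum
        rw [Nat.cast_sum]
        rw [Finset.sum_congr rfl (fun i hi => by
          rw [Nat.cast_sub (hle i hi).1])]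
        rw [Finset.sum_sub_distrib]
        push_cast
        rw [Finset.sum_add_distrib, Finset.sum_const, h1]
        simp
      exact_mod_cast this
    rwa [hcard] at hmem

/-- companion-style step matrix -/
def auxX {A : Type*} [CommRing A] (m : ℕ) (a : ℕ → A) : Fin m → Fin m → A := fun i' i =>
  if h : (i : ℕ) + 1 < m then (if i' = ⟨(i : ℕ) + 1, h⟩ then 1 else 0) else -(a (i' : ℕ))

lemma auxX_step {A B : Type*} [CommRing A] [CommRing B] [Algebra A B] (x : B) (m : ℕ)
    (a : ℕ → A) (ham : a m = 1)
    (hasum : ∑ k ∈ Finset.range (m + 1), algebraMap A B (a k) * x ^ k = 0) (i : Fin m) :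
    x * x ^ (i : ℕ) = ∑ i' : Fin m, algebraMap A B (auxX m a i' i) * x ^ (i' : ℕ) := by
  set φ := algebraMap A B
  by_cases h : (i : ℕ) + 1 < m
  · have h1 : ∀ i' : Fin m, φ (auxX m a i' i) * x ^ (i' : ℕ) =
        if i' = ⟨(i : ℕ) + 1, h⟩ then x ^ (i' : ℕ) else 0 := by
      intro i'
      simp only [auxX, dif_pos h, apply_ite φ, map_one, map_zero, ite_mul, one_mul, zero_mul]
    rw [Finset.sum_congr rfl fun i' _ => h1 i',
      Finset.sum_ite_eq' Finset.univ (⟨(i : ℕ) + 1, h⟩ : Fin m) (fun i' => x ^ (i' : ℕ)),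
      if_pos (Finset.mem_univ _)]
    exact (pow_succ' x (i : ℕ)).symm
  · have him : (i : ℕ) + 1 = m := le_antisymm i.isLt (not_lt.mp h)
    have hxm : x ^ m = ∑ i' : Fin m, φ (-(a (i' : ℕ))) * x ^ (i' : ℕ) := by
      have h2 : x ^ m = -∑ k ∈ Finset.range m, φ (a k) * x ^ k := by
        have h3 := hasum
        rw [Finset.sum_range_succ, ham, map_one, one_mul] at h3
        exact eq_neg_of_add_eq_zero_right h3
      rw [h2, ← Finset.sum_neg_distrib,
        ← Fin.sum_univ_eq_sum_range (fun k => -(φ (a k) * x ^ k)) m]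
      exact Finset.sum_congr rfl fun i' _ => by rw [map_neg, neg_mul]
    have h4 : ∀ i' : Fin m, φ (auxX m a i' i) * x ^ (i' : ℕ) =
        φ (-(a (i' : ℕ))) * x ^ (i' : ℕ) := by
      intro i'; simp only [auxX, dif_neg h]
    rw [Finset.sum_congr rfl fun i' _ => h4 i', ← hxm, ← pow_succ' x (i : ℕ), him]

lemma auxX_mem {A : Type*} [CommRing A] (K : ℕ → Ideal A) (hK0 : K 0 = ⊤) (m : ℕ)
    (a : ℕ → A) (haK : ∀ i ≤ m, a i ∈ K (m - i)) (r c : Fin m) :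
    auxX m a r c = 0 ∨
      ((r : ℕ) ≤ (c : ℕ) + 1 ∧ auxX m a r c ∈ K ((c : ℕ) + 1 - (r : ℕ))) := by
  by_cases h : (c : ℕ) + 1 < m
  · by_cases hr : r = ⟨(c : ℕ) + 1, h⟩
    · right
      refine ⟨by rw [hr], ?_⟩
      simp only [auxX, dif_pos h, if_pos hr]
      have : (c : ℕ) + 1 - (r : ℕ) = 0 := by rw [hr]; simp
      rw [this, hK0]
      exact Submodule.mem_top
    · left; simp only [auxX, dif_pos h, if_neg hr]
  · right
    have hcm : (c : ℕ) + 1 = m := le_antisymm c.isLt (not_lt.mp h)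
    refine ⟨by have := r.isLt; omega, ?_⟩
    simp only [auxX, dif_neg h]
    rw [hcm]
    exact neg_mem (haK (r : ℕ) (le_of_lt r.isLt))

theorem stmt17 {A B : Type*} [CommRing A] [CommRing B] [Algebra A B] (I J : ℕ → Ideal A)
    (hI0 : I 0 = ⊤) (hImul : ∀ a b : ℕ, I a * I b ≤ I (a + b))
    (hJ0 : J 0 = ⊤) (hJmul : ∀ a b : ℕ, J a * J b ≤ J (a + b)) (x y : B) (m n : ℕ)
    (hx : ∃ a : ℕ → A, (∑ k ∈ Finset.range (m + 1), algebraMap A B (a k) * x ^ k = 0) ∧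
      a m = 1 ∧ ∀ i ≤ m, a i ∈ I (m - i))
    (hy : ∃ a : ℕ → A, (∑ k ∈ Finset.range (n + 1), algebraMap A B (a k) * y ^ k = 0) ∧
      a n = 1 ∧ ∀ i ≤ n, a i ∈ J (n - i)) :
    ∃ a : ℕ → A, (∑ k ∈ Finset.range (n * m + 1), algebraMap A B (a k) * (x * y) ^ k = 0) ∧
      a (n * m) = 1 ∧ ∀ i ≤ n * m, a i ∈ I (n * m - i) * J (n * m - i) := by
  classical
  obtain ⟨a, hasum, ham, haI⟩ := hx
  obtain ⟨b, hbsum, hbn, hbJ⟩ := hy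
  rcases subsingleton_or_nontrivial A with hA | hA
  · refine ⟨fun _ => 1, ?_, rfl, fun i _ => ?_⟩
    · have h10 : (1 : B) = 0 := by
        have : algebraMap A B 1 = algebraMap A B 0 := by rw [Subsingleton.elim (1 : A) 0]
        simpa using this
      haveI : Subsingleton B := subsingleton_of_zero_eq_one h10.symm
      exact Subsingleton.elim _ _
    · have h0 : (1 : A) = 0 := Subsingleton.elim _ _
      rw [h0]; exact zero_mem _
  have htriv : (1 : B) = 0 → ∃ a : ℕ → A,
      (∑ k ∈ Finset.range (n * m + 1), algebraMap A B (a k) * (x * y) ^ k = 0) ∧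
      a (n * m) = 1 ∧ ∀ i ≤ n * m, a i ∈ I (n * m - i) * J (n * m - i) := by
    intro h10
    haveI : Subsingleton B := subsingleton_of_zero_eq_one h10.symm
    refine ⟨fun k => if k = n * m then 1 else 0, Subsingleton.elim _ _, if_pos rfl,
      fun i hi => ?_⟩
    dsimp only
    by_cases h : i = n * m
    · subst h
      rw [if_pos rfl, Nat.sub_self, hI0, hJ0, Ideal.top_mul]
      exact Submodule.mem_top
    · rw [if_neg h]; exact zero_mem _
  rcases Nat.eq_zero_or_pos m with hm | hm
  · subst hm
    exact htriv (by simpa [ham] using hasum)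
  rcases Nat.eq_zero_or_pos n with hn | hn
  · subst hn
    exact htriv (by simpa [hbn] using hbsum)
  set φ := algebraMap A B with hφ
  set Xm := auxX m a with hXm
  set Yn := auxX n b with hYn
  have hxstep := auxX_step x m a ham hasum
  have hystep := auxX_step y n b hbn hbsum
  have hXmF : ∀ r c : Fin m, Xm r c = 0 ∨
      ((r : ℕ) ≤ (c : ℕ) + 1 ∧ Xm r c ∈ I ((c : ℕ) + 1 - (r : ℕ))) := auxX_mem I hI0 m a haI
  have hYnF : ∀ r c : Fin n, Yn r c = 0 ∨
      ((r : ℕ) ≤ (c : ℕ) + 1 ∧ Yn r c ∈ J ((c : ℕ) + 1 - (r : ℕ))) := auxX_mem J hJ0 n b hbJ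
  set e : Fin m × Fin n → B := fun c => x ^ (c.1 : ℕ) * y ^ (c.2 : ℕ) with he
  set M : Matrix (Fin m × Fin n) (Fin m × Fin n) A :=
    fun r c => Xm c.1 r.1 * Yn c.2 r.2 with hM
  have hMval : ∀ r c, M r c = Xm c.1 r.1 * Yn c.2 r.2 := fun r c => rfl
  have heval : ∀ c, e c = x ^ (c.1 : ℕ) * y ^ (c.2 : ℕ) := fun c => rfl
  have hrel : ∀ c, (x * y) * e c = ∑ r, φ (M c r) * e r := by
    intro c
    calc (x * y) * e c = (x * x ^ (c.1 : ℕ)) * (y * y ^ (c.2 : ℕ)) := by rw [heval]; ring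
      _ = (∑ i' : Fin m, φ (Xm i' c.1) * x ^ (i' : ℕ)) *
          (∑ j' : Fin n, φ (Yn j' c.2) * y ^ (j' : ℕ)) := by rw [hxstep c.1, hystep c.2]
      _ = ∑ r : Fin m × Fin n, φ (M c r) * e r := by
          rw [Finset.sum_mul_sum, Fintype.sum_prod_type]
          refine Finset.sum_congr rfl fun i' _ => Finset.sum_congr rfl fun j' _ => ?_
          rw [hMval, heval, map_mul]
          ring
  -- Cayley-Hamilton style annihilation
  have hdet0 : Polynomial.aeval (x * y) M.charpoly = 0 := by
    set N : Matrix (Fin m × Fin n) (Fin m × Fin n) B :=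
      (x * y) • (1 : Matrix (Fin m × Fin n) (Fin m × Fin n) B) - M.map φ with hN
    have hNval : ∀ r c, N r c =
        ((x * y) • (1 : Matrix (Fin m × Fin n) (Fin m × Fin n) B)) r c - φ (M r c) := by
      intro r c; rw [hN, Matrix.sub_apply, Matrix.map_apply]
    have hmv : N.mulVec e = 0 := by
      funext c
      show ∑ r, N c r * e r = 0
      have expand : ∀ r, N c r * e r =
          (if c = r then (x * y) * e r else 0) - φ (M c r) * e r := by
        intro r
        rw [hNval, Matrix.smul_apply, Matrix.one_apply, sub_mul, smul_eq_mul]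
        split_ifs <;> ring
      rw [Finset.sum_congr rfl fun r _ => expand r, Finset.sum_sub_distrib,
        Finset.sum_ite_eq Finset.univ c (fun r => (x * y) * e r),
        if_pos (Finset.mem_univ c), ← hrel c, sub_self]
    have hdet : N.det • e = 0 := by
      have h1 := congrArg (fun v => N.adjugate.mulVec v) hmv
      simpa only [Matrix.mulVec_mulVec, Matrix.adjugate_mul, Matrix.smul_mulVec,
        Matrix.one_mulVec, Matrix.mulVec_zero] using h1
    have h3 := congrFun hdet (⟨⟨0, hm⟩, ⟨0, hn⟩⟩ : Fin m × Fin n)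
    have h4 : N.det = 0 := by
      have h5 : e (⟨⟨0, hm⟩, ⟨0, hn⟩⟩ : Fin m × Fin n) = 1 := by rw [heval]; simp
      simpa [h5] using h3
    have h5 : (Matrix.charmatrix M).map (Polynomial.aeval (x * y) : Polynomial A → B) = N := by
      ext r c
      by_cases hrc : r = c
      · subst hrc
        rw [Matrix.map_apply, Matrix.charmatrix_apply_eq, map_sub, Polynomial.aeval_X,
          Polynomial.aeval_C, hNval, Matrix.smul_apply, Matrix.one_apply_eq, smul_eq_mul,
          mul_one]
      · rw [Matrix.map_apply, Matrix.charmatrix_apply_ne _ _ _ hrc, map_neg,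
          Polynomial.aeval_C, hNval, Matrix.smul_apply, Matrix.one_apply_ne hrc,
          smul_eq_mul, mul_zero, zero_sub]
    have h6 := AlgHom.map_det (Polynomial.aeval (x * y) : Polynomial A →ₐ[A] B)
      (Matrix.charmatrix M)
    rw [Matrix.charpoly, h6, AlgHom.mapMatrix_apply, h5]
    exact h4
  -- coefficient membership
  have hcoeff : ∀ k, k ≤ m * n → M.charpoly.coeff k ∈ I (m * n - k) * J (m * n - k) := by
    intro k hk
    rw [Matrix.charpoly, Matrix.det_apply, Polynomial.finset_sum_coeff]
    apply Ideal.sum_mem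
    intro σ _
    rw [Polynomial.coeff_smul, Units.smul_def, zsmul_eq_mul]
    apply Ideal.mul_mem_left
    have hfac : ∀ i : Fin m × Fin n, Matrix.charmatrix M (σ i) i =
        (if σ i = i then (Polynomial.X : Polynomial A) else 0) +
          (-Polynomial.C (M (σ i) i)) := by
      intro i
      by_cases hi : σ i = i
      · rw [if_pos hi, hi, Matrix.charmatrix_apply_eq]; ring
      · rw [if_neg hi, Matrix.charmatrix_apply_ne _ _ _ hi]; ring
    rw [Finset.prod_congr rfl fun i _ => hfac i, Finset.prod_add,
      Polynomial.finset_sum_coeff]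
    apply Ideal.sum_mem
    intro t ht
    by_cases hfix : ∀ i ∈ t, σ i = i
    · have hXpow : (∏ i ∈ t, if σ i = i then (Polynomial.X : Polynomial A) else 0) =
          Polynomial.X ^ t.card := by
        rw [Finset.prod_congr rfl fun i hi => if_pos (hfix i hi), Finset.prod_const]
      set u := Finset.univ \ t with hu
      have hprodC : (∏ i ∈ u, -Polynomial.C (M (σ i) i)) =
          (-1) ^ u.card * Polynomial.C (∏ i ∈ u, M (σ i) i) := by
        rw [Finset.prod_congr rfl fun i _ => (neg_one_mul (Polynomial.C (M (σ i) i))).symm,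
          Finset.prod_mul_distrib, Finset.prod_const, map_prod]
      rw [hXpow, hprodC,
        show (Polynomial.X : Polynomial A) ^ t.card *
            ((-1) ^ u.card * Polynomial.C (∏ i ∈ u, M (σ i) i)) =
          Polynomial.C ((-1) ^ u.card * ∏ i ∈ u, M (σ i) i) * Polynomial.X ^ t.card from by
          rw [map_mul, map_pow, map_neg, map_one]; ring,
        Polynomial.coeff_C_mul, Polynomial.coeff_X_pow]
      by_cases hkt : k = t.card
      · rw [if_pos hkt, mul_one]
        apply Ideal.mul_mem_left
        have hperm : ∀ i ∈ u, σ i ∈ u := by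
          intro i hi
          rw [hu, Finset.mem_sdiff] at hi ⊢
          refine ⟨Finset.mem_univ _, fun hσt => ?_⟩
          have h1 : σ (σ i) = σ i := hfix _ hσt
          have h2 : σ i = i := σ.injective h1
          exact hi.2 (h2 ▸ hσt)
        have himg : u.image σ = u := by
          apply Finset.eq_of_subset_of_card_le (Finset.image_subset_iff.mpr hperm)
          rw [Finset.card_image_of_injective _ σ.injective]
        have hsum1 : ∑ i ∈ u, ((σ i).1 : ℕ) = ∑ i ∈ u, (i.1 : ℕ) := by
          have h7 := Finset.sum_image (g := σ) (f := fun p : Fin m × Fin n => (p.1 : ℕ))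
            (s := u) (fun x _ y _ h => σ.injective h)
          rw [himg] at h7
          exact h7.symm
        have hsum2 : ∑ i ∈ u, ((σ i).2 : ℕ) = ∑ i ∈ u, (i.2 : ℕ) := by
          have h7 := Finset.sum_image (g := σ) (f := fun p : Fin m × Fin n => (p.2 : ℕ))
            (s := u) (fun x _ y _ h => σ.injective h)
          rw [himg] at h7
          exact h7.symm
        have hI' := aux_key I hI0 hImul Xm hXmF u σ (fun p => p.1) hsum1
        have hJ' := aux_key J hJ0 hJmul Yn hYnF u σ (fun p => p.2) hsum2
        have hc0 : (∏ i ∈ u, M (σ i) i) ∈ I u.card * J u.card := by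
          have heq : ∏ i ∈ u, M (σ i) i = ∏ i ∈ u, (Xm i.1 (σ i).1 * Yn i.2 (σ i).2) :=
            Finset.prod_congr rfl fun i _ => hMval (σ i) i
          rw [heq, Finset.prod_mul_distrib]
          exact Ideal.mul_mem_mul hI' hJ'
        have hucard : u.card = m * n - k := by
          rw [hu, Finset.card_sdiff_of_subset (Finset.subset_univ t), Finset.card_univ,
            Fintype.card_prod, Fintype.card_fin, Fintype.card_fin, hkt]
        rwa [hucard] at hc0
      · rw [if_neg hkt, mul_zero]; exact zero_mem _
    · push_neg at hfix
      obtain ⟨i, hit, hσi⟩ := hfix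
      have h0 : (if σ i = i then (Polynomial.X : Polynomial A) else 0) = 0 := if_neg hσi
      rw [Finset.prod_eq_zero hit h0, zero_mul, Polynomial.coeff_zero]
      exact zero_mem _
  -- assemble
  have hdeg : M.charpoly.natDegree = m * n := by
    rw [Matrix.charpoly_natDegree_eq_dim, Fintype.card_prod, Fintype.card_fin, Fintype.card_fin]
  refine ⟨fun k => M.charpoly.coeff k, ?_, ?_, ?_⟩
  · have hlt : M.charpoly.natDegree < n * m + 1 := by rw [hdeg, Nat.mul_comm m n]; exact Nat.lt_succ_self _
    have h8 := Polynomial.aeval_eq_sum_range' hlt (x * y)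
    rw [hdet0] at h8
    rw [Finset.sum_congr rfl fun k _ => by rw [← Algebra.smul_def]]
    exact h8.symm
  · rw [show n * m = m * n from Nat.mul_comm n m, ← hdeg]
    exact (Matrix.charpoly_monic M).coeff_natDegree
  · intro i hi
    rw [show n * m = m * n from Nat.mul_comm n m] at hi ⊢
    exact hcoeff i hi
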